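/- Let K be a closed set in ℝⁿ and h : ℝⁿ → ℝ ∪ {+∞} a proper function with K ∩ dom h ≠ ∅ that is prox-convex on K with prox-convex value α > 0, and let x* ∈ argmin_K h. If z ∈ K and x̄ ∈ prox_h(K, z), then ‖x̄ − x*‖² ≤ ‖z − x*‖² + (2/α)(h(x*) − h(x̄)) ≤ ‖z − x*‖². In particular, the proximal point iterates are Fejér monotone with respect to x*. -/
import Mathlib


open Set Filter RealInnerProductSpace

noncomputable section

/-- `proxSet h K z` is the set `prox_h(K, z) := argmin_{x ∈ K} [h(x) + (1/2)‖x − z‖²]`. -/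
def proxSet {n : ℕ} (h : EuclideanSpace ℝ (Fin n) → EReal)
    (K : Set (EuclideanSpace ℝ (Fin n))) (z : EuclideanSpace ℝ (Fin n)) :
    Set (EuclideanSpace ℝ (Fin n)) :=
  {x ∈ K | ∀ y ∈ K,
    h x + (((1/2 : ℝ) * ‖x - z‖ ^ 2 : ℝ) : EReal) ≤ h y + (((1/2 : ℝ) * ‖y - z‖ ^ 2 : ℝ) : EReal)}

/-- `h` is prox-convex on `K` with prox-convex value `α > 0` if for every `z ∈ K`
the set `prox_h(K, z)` is nonempty and every `x̄ ∈ prox_h(K, z)` satisfies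
`h(x̄) − h(x) ≤ α⟨x̄ − z, x − x̄⟩` for all `x ∈ K`. -/
def ProxConvexOn {n : ℕ} (h : EuclideanSpace ℝ (Fin n) → EReal)
    (K : Set (EuclideanSpace ℝ (Fin n))) (α : ℝ) : Prop :=
  ∀ z ∈ K, (proxSet h K z).Nonempty ∧
    ∀ xbar ∈ proxSet h K z, ∀ x ∈ K,
      h xbar - h x ≤ (((α * ⟪xbar - z, x - xbar⟫) : ℝ) : EReal)

/-- If `h` is proper and prox-convex on the closed set `K` with value
`α > 0`, `x* ∈ argmin_K h`, `z ∈ K` and `x̄ ∈ prox_h(K, z)`, then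
`‖x̄ − x*‖² ≤ ‖z − x*‖² + (2/α)(h(x*) − h(x̄)) ≤ ‖z − x*‖²`; in particular the proximal
point iterates are Fejér monotone with respect to `x*`. -/
theorem statement_18 {n : ℕ} (K : Set (EuclideanSpace ℝ (Fin n))) (hKcl : IsClosed K)
    (h : EuclideanSpace ℝ (Fin n) → EReal)
    (hproper_dom : ∃ x, h x ≠ ⊤) (hproper_bot : ∀ x, h x ≠ ⊥)
    (hKdom : (K ∩ {x | h x ≠ ⊤}).Nonempty)
    (α : ℝ) (hα : 0 < α) (hpc : ProxConvexOn h K α)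
    (xstar : EuclideanSpace ℝ (Fin n)) (hxstarK : xstar ∈ K)
    (hxstarmin : ∀ y ∈ K, h xstar ≤ h y) :
    (∀ z ∈ K, ∀ xbar ∈ proxSet h K z,
      ((‖xbar - xstar‖ ^ 2 : ℝ) : EReal) ≤
        ((‖z - xstar‖ ^ 2 : ℝ) : EReal) + ((2/α : ℝ) : EReal) * (h xstar - h xbar) ∧
      ((‖z - xstar‖ ^ 2 : ℝ) : EReal) + ((2/α : ℝ) : EReal) * (h xstar - h xbar) ≤
        ((‖z - xstar‖ ^ 2 : ℝ) : EReal)) ∧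
    (∀ x : ℕ → EuclideanSpace ℝ (Fin n), x 0 ∈ K →
      (∀ k : ℕ, x (k + 1) ∈ proxSet h K (x k)) →
      ∀ k : ℕ, ‖x (k + 1) - xstar‖ ≤ ‖x k - xstar‖) := by

  obtain ⟨y0, hy0K, hy0dom⟩ := hKdom
  have key : ∀ z ∈ K, ∀ xbar ∈ proxSet h K z,
      ((‖xbar - xstar‖ ^ 2 : ℝ) : EReal) ≤
        ((‖z - xstar‖ ^ 2 : ℝ) : EReal) + ((2/α : ℝ) : EReal) * (h xstar - h xbar) ∧
      ((‖z - xstar‖ ^ 2 : ℝ) : EReal) + ((2/α : ℝ) : EReal) * (h xstar - h xbar) ≤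
        ((‖z - xstar‖ ^ 2 : ℝ) : EReal) := by
    intro z hzK xbar hxbar
    have hxbarK : xbar ∈ K := hxbar.1
    -- h xbar is finite
    have hxbar_ne_top : h xbar ≠ ⊤ := by
      intro htop
      have hle := hxbar.2 y0 hy0K
      have hrhs : h y0 + (((1/2 : ℝ) * ‖y0 - z‖ ^ 2 : ℝ) : EReal) ≠ ⊤ :=
        (EReal.add_lt_top hy0dom (EReal.coe_ne_top _)).ne
      rw [htop, EReal.top_add_of_ne_bot (EReal.coe_ne_bot _), top_le_iff] at hle
      exact hrhs hle
    have hxstar_ne_top : h xstar ≠ ⊤ := by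
      intro htop
      have := hxstarmin y0 hy0K
      rw [htop, top_le_iff] at this
      exact hy0dom this
    set a : ℝ := (h xbar).toReal with ha
    set b : ℝ := (h xstar).toReal with hb
    have hxbar_eq : h xbar = (a : EReal) := (EReal.coe_toReal hxbar_ne_top (hproper_bot _)).symm
    have hxstar_eq : h xstar = (b : EReal) := (EReal.coe_toReal hxstar_ne_top (hproper_bot _)).symm
    -- prox-convexity inequality
    have hpc' := (hpc z hzK).2 xbar hxbar xstar hxstarK
    rw [hxbar_eq, hxstar_eq] at hpc'
    rw [← EReal.coe_sub, EReal.coe_le_coe_iff] at hpc'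
    -- minimality
    have hmin : b ≤ a := by
      have := hxstarmin xbar hxbarK
      rw [hxbar_eq, hxstar_eq, EReal.coe_le_coe_iff] at this
      exact this
    -- norm identity
    have hid : ‖z - xstar‖ ^ 2 = ‖z - xbar‖ ^ 2 + 2 * ⟪z - xbar, xbar - xstar⟫ + ‖xbar - xstar‖ ^ 2 := by
      have := norm_add_sq_real (z - xbar) (xbar - xstar)
      rw [sub_add_sub_cancel] at this
      exact this
    have hinner : ⟪xbar - z, xstar - xbar⟫ = ⟪z - xbar, xbar - xstar⟫ := by
      rw [show xbar - z = -(z - xbar) by abel, show xstar - xbar = -(xbar - xstar) by abel,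
        inner_neg_neg]
    rw [hinner] at hpc'
    have hnn : (0:ℝ) ≤ ‖z - xbar‖ ^ 2 := sq_nonneg _
    have h3 : -(2 * ⟪z - xbar, xbar - xstar⟫) ≤ (2/α) * (b - a) := by
      rw [div_mul_eq_mul_div, le_div_iff₀ hα]
      nlinarith [hpc']
    have hreal1 : ‖xbar - xstar‖ ^ 2 ≤ ‖z - xstar‖ ^ 2 + (2/α) * (b - a) := by
      linarith [hid, hnn, h3]
    have hreal2 : ‖z - xstar‖ ^ 2 + (2/α) * (b - a) ≤ ‖z - xstar‖ ^ 2 := by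
      have : (2/α) * (b - a) ≤ 0 := by
        apply mul_nonpos_of_nonneg_of_nonpos
        · positivity
        · linarith
      linarith
    rw [hxbar_eq, hxstar_eq, ← EReal.coe_sub, ← EReal.coe_mul, ← EReal.coe_add]
    exact ⟨EReal.coe_le_coe_iff.2 hreal1, EReal.coe_le_coe_iff.2 hreal2⟩
  constructor
  · exact key
  · intro x hx0 hxk k
    have hmemK : ∀ k, x k ∈ K := by
      intro k
      induction k with
      | zero => exact hx0
      | succ m ih => exact (hxk m).1
    have := key (x k) (hmemK k) (x (k+1)) (hxk k)
    have hsq : ((‖x (k+1) - xstar‖ ^ 2 : ℝ) : EReal) ≤ ((‖x k - xstar‖ ^ 2 : ℝ) : EReal) :=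
      this.1.trans this.2
    rw [EReal.coe_le_coe_iff] at hsq
    exact le_of_pow_le_pow_left₀ two_ne_zero (norm_nonneg _) hsq
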